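/- arXiv:1501.05448 — 2 statements merged into one kernel-verified Lean document; each statement's English description precedes it below -/
import Mathlib

section
/- Let φ ∈ L¹(Ω), 0 < m(Ω) < ∞, α ∈ (0,1), Θ = {θ : Ω → [0,1] measurable, ∫_Ω θ = α·m(Ω)}, and c_φ, α̲_φ as above. Then for every θ ∈ Θ, ∫_Ω θφ ≤ ∫_{ {φ > c_φ} } φ + (α - α̲_φ)·m(Ω)·c_φ. -/
set_option maxHeartbeats 800000


open MeasureTheory Set

theorem stmt7 {d : ℕ} (Ω : Set (Fin d → ℝ)) (hΩ : MeasurableSet Ω)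
    (hpos : 0 < volume Ω) (hfin : volume Ω ≠ ⊤)
    (α : ℝ) (hα : α ∈ Set.Ioo (0:ℝ) 1)
    (φ : (Fin d → ℝ) → ℝ) (hφm : Measurable φ) (hφ : IntegrableOn φ Ω)
    (cφ : ℝ)
    (hc : IsGreatest {c : ℝ | α * (volume Ω).toReal ≤ (volume {x ∈ Ω | c ≤ φ x}).toReal} cφ)
    (θ : (Fin d → ℝ) → ℝ) (hθm : Measurable θ)
    (hθ01 : ∀ x ∈ Ω, θ x ∈ Set.Icc (0:ℝ) 1)
    (hθint : ∫ x in Ω, θ x = α * (volume Ω).toReal) :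
    ∫ x in Ω, θ x * φ x
      ≤ (∫ x in {x ∈ Ω | cφ < φ x}, φ x)
        + (α - (volume {x ∈ Ω | cφ < φ x}).toReal / (volume Ω).toReal)
          * (volume Ω).toReal * cφ := by
  set A : Set (Fin d → ℝ) := {x ∈ Ω | cφ < φ x} with hAdef
  have hA : MeasurableSet A := hΩ.inter (measurableSet_lt measurable_const hφm)
  have hAsub : A ⊆ Ω := fun x hx => hx.1
  have hμA : volume A ≠ ⊤ := (lt_of_le_of_lt (measure_mono hAsub) hfin.lt_top).ne
  have hm0 : (volume Ω).toReal ≠ 0 := (ENNReal.toReal_pos hpos.ne' hfin).ne'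
  -- integrability facts
  have hconst : IntegrableOn (fun _ => cφ) Ω := integrableOn_const hfin
  have h1 : IntegrableOn (fun x => φ x - cφ) Ω := hφ.sub hconst
  have hθae : ∀ᵐ x ∂(volume.restrict Ω), θ x ∈ Set.Icc (0:ℝ) 1 :=
    (ae_restrict_iff' hΩ).2 (Filter.Eventually.of_forall hθ01)
  have h2 : IntegrableOn (fun x => θ x * (φ x - cφ)) Ω := by
    apply Integrable.mono' h1.abs ((hθm.mul ((hφm.sub measurable_const))).aestronglyMeasurable)
    filter_upwards [hθae] with x hx
    have : |θ x * (φ x - cφ)| ≤ |φ x - cφ| := by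
      rw [abs_mul]
      calc |θ x| * |φ x - cφ| ≤ 1 * |φ x - cφ| := by
            apply mul_le_mul_of_nonneg_right _ (abs_nonneg _)
            rw [abs_le]; constructor <;> linarith [hx.1, hx.2]
        _ = |φ x - cφ| := one_mul _
    rw [Real.norm_eq_abs]; exact this
  have hθφ : IntegrableOn (fun x => θ x * φ x) Ω := by
    apply Integrable.mono' hφ.abs ((hθm.mul hφm).aestronglyMeasurable)
    filter_upwards [hθae] with x hx
    have : |θ x * φ x| ≤ |φ x| := by
      rw [abs_mul]
      calc |θ x| * |φ x| ≤ 1 * |φ x| := by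
            apply mul_le_mul_of_nonneg_right _ (abs_nonneg _)
            rw [abs_le]; constructor <;> linarith [hx.1, hx.2]
        _ = |φ x| := one_mul _
    rw [Real.norm_eq_abs]; exact this
  have hθi : IntegrableOn θ Ω := by
    have hone : IntegrableOn (fun _ => (1:ℝ)) Ω := integrableOn_const hfin
    apply Integrable.mono' hone hθm.aestronglyMeasurable
    filter_upwards [hθae] with x hx
    simp only [Real.norm_eq_abs, norm_one]
    rw [abs_le]; constructor <;> linarith [hx.1, hx.2]
  -- key pointwise inequality and integral comparison
  have key : ∫ x in Ω, θ x * (φ x - cφ) ≤ ∫ x in Ω, A.indicator (fun x => φ x - cφ) x := by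
    apply setIntegral_mono_on h2 (h1.indicator hA) hΩ
    intro x hx
    by_cases hxA : cφ < φ x
    · have hmem : x ∈ A := ⟨hx, hxA⟩
      rw [Set.indicator_of_mem hmem]
      have := hθ01 x hx
      nlinarith [this.1, this.2]
    · have hmem : x ∉ A := fun h => hxA h.2
      rw [Set.indicator_of_notMem hmem]
      have := hθ01 x hx
      nlinarith [this.1, this.2, not_lt.1 hxA]
  have hind : ∫ x in Ω, A.indicator (fun x => φ x - cφ) x = ∫ x in A, (φ x - cφ) := by
    rw [setIntegral_indicator hA, Set.inter_eq_self_of_subset_right hAsub]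
  -- expand both sides
  have hL : ∫ x in Ω, θ x * (φ x - cφ)
      = (∫ x in Ω, θ x * φ x) - cφ * (α * (volume Ω).toReal) := by
    have : ∀ x, θ x * (φ x - cφ) = θ x * φ x - cφ * θ x := by intro x; ring
    simp_rw [this]
    rw [integral_sub hθφ (hθi.const_mul cφ), integral_const_mul, hθint]
  have hR : ∫ x in A, (φ x - cφ) = (∫ x in A, φ x) - (volume A).toReal * cφ := by
    rw [integral_sub (hφ.mono_set hAsub) (integrableOn_const hμA)]
    simp [smul_eq_mul, Measure.real]
  have hdiv : (volume A).toReal / (volume Ω).toReal * (volume Ω).toReal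
      = (volume A).toReal := div_mul_cancel₀ _ hm0
  rw [hL, hind, hR] at key
  have hfinal : (α - (volume A).toReal / (volume Ω).toReal) * (volume Ω).toReal * cφ
      = cφ * (α * (volume Ω).toReal) - (volume A).toReal * cφ := by
    field_simp
  linarith [key]
end

section
/- With notation as above (φ ∈ L¹(Ω), 0 < m(Ω) < ∞, α ∈ (0,1), Θ, c_φ, α̲_φ), a function θ̄ ∈ Θ attains sup_{θ∈Θ} ∫_Ω θφ if and only if θ̄ = 1 a.e. on {φ > c_φ} and θ̄ = 0 a.e. on {φ < c_φ}. In particular the supremum is attained. -/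
open MeasureTheory Set

-- bounded measurable functions are integrable on a finite-measure set
private lemma bathtub_intOn_bdd {d : ℕ} {Ω : Set (Fin d → ℝ)} (hΩ : MeasurableSet Ω)
    (hfin : volume Ω ≠ ⊤) {θ : (Fin d → ℝ) → ℝ} (hm : Measurable θ)
    (hb : ∀ x ∈ Ω, θ x ∈ Set.Icc (0:ℝ) 1) : IntegrableOn θ Ω := by
  have h1 : IntegrableOn (fun _ => (1:ℝ)) Ω := integrableOn_const hfin
  refine h1.mono' hm.aestronglyMeasurable.restrict ?_
  filter_upwards [ae_restrict_mem hΩ] with x hx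
  rw [Real.norm_eq_abs, abs_le]
  exact ⟨by linarith [(hb x hx).1], (hb x hx).2⟩

private lemma bathtub_intOn_mul {d : ℕ} {Ω : Set (Fin d → ℝ)} (hΩ : MeasurableSet Ω)
    {φ θ : (Fin d → ℝ) → ℝ} (hφ : IntegrableOn φ Ω) (hm : Measurable θ)
    (hb : ∀ x ∈ Ω, θ x ∈ Set.Icc (0:ℝ) 1) : IntegrableOn (fun x => θ x * φ x) Ω := by
  refine hφ.bdd_mul (c := 1) hm.aestronglyMeasurable.restrict ?_
  filter_upwards [ae_restrict_mem hΩ] with x hx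
  rw [Real.norm_eq_abs, abs_le]
  exact ⟨by linarith [(hb x hx).1], (hb x hx).2⟩

-- expansion of the key integral
private lemma bathtub_expand {d : ℕ} {Ω : Set (Fin d → ℝ)} (hΩ : MeasurableSet Ω)
    (hfin : volume Ω ≠ ⊤) {φ θ1 θ2 : (Fin d → ℝ) → ℝ} (cφ : ℝ)
    (hφ : IntegrableOn φ Ω)
    (h1m : Measurable θ1) (h1b : ∀ x ∈ Ω, θ1 x ∈ Set.Icc (0:ℝ) 1)
    (h2m : Measurable θ2) (h2b : ∀ x ∈ Ω, θ2 x ∈ Set.Icc (0:ℝ) 1)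
    (heq : ∫ x in Ω, θ1 x = ∫ x in Ω, θ2 x) :
    ∫ x in Ω, (θ1 x - θ2 x) * (φ x - cφ)
      = (∫ x in Ω, θ1 x * φ x) - ∫ x in Ω, θ2 x * φ x := by
  have hi1 := bathtub_intOn_bdd hΩ hfin h1m h1b
  have hi2 := bathtub_intOn_bdd hΩ hfin h2m h2b
  have hm1 := bathtub_intOn_mul hΩ hφ h1m h1b
  have hm2 := bathtub_intOn_mul hΩ hφ h2m h2b
  have key : (fun x => (θ1 x - θ2 x) * (φ x - cφ))
      = fun x => (θ1 x * φ x - θ2 x * φ x) - cφ * (θ1 x - θ2 x) := by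
    funext x; ring
  have i12 : IntegrableOn (fun x => θ1 x * φ x - θ2 x * φ x) Ω := hm1.sub hm2
  have ic : IntegrableOn (fun x => cφ * (θ1 x - θ2 x)) Ω := (hi1.sub hi2).const_mul cφ
  have isub : IntegrableOn (fun x => θ1 x - θ2 x) Ω := hi1.sub hi2
  rw [key, integral_sub i12 ic, integral_sub hm1 hm2, integral_const_mul,
    integral_sub hi1 hi2, heq]
  ring

theorem stmt8 {d : ℕ} (Ω : Set (Fin d → ℝ)) (hΩ : MeasurableSet Ω)
    (hpos : 0 < volume Ω) (hfin : volume Ω ≠ ⊤)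
    (α : ℝ) (hα : α ∈ Set.Ioo (0:ℝ) 1)
    (φ : (Fin d → ℝ) → ℝ) (hφm : Measurable φ) (hφ : IntegrableOn φ Ω)
    (cφ : ℝ)
    (hc : IsGreatest {c : ℝ | α * (volume Ω).toReal ≤ (volume {x ∈ Ω | c ≤ φ x}).toReal} cφ) :
    (∃ θb : (Fin d → ℝ) → ℝ,
      (Measurable θb ∧ (∀ x ∈ Ω, θb x ∈ Set.Icc (0:ℝ) 1) ∧
        ∫ x in Ω, θb x = α * (volume Ω).toReal) ∧
      ∀ θ : (Fin d → ℝ) → ℝ,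
        (Measurable θ ∧ (∀ x ∈ Ω, θ x ∈ Set.Icc (0:ℝ) 1) ∧
          ∫ x in Ω, θ x = α * (volume Ω).toReal) →
        ∫ x in Ω, θ x * φ x ≤ ∫ x in Ω, θb x * φ x) ∧
    (∀ θb : (Fin d → ℝ) → ℝ,
      (Measurable θb ∧ (∀ x ∈ Ω, θb x ∈ Set.Icc (0:ℝ) 1) ∧
        ∫ x in Ω, θb x = α * (volume Ω).toReal) →
      ((∀ θ : (Fin d → ℝ) → ℝ,
          (Measurable θ ∧ (∀ x ∈ Ω, θ x ∈ Set.Icc (0:ℝ) 1) ∧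
            ∫ x in Ω, θ x = α * (volume Ω).toReal) →
          ∫ x in Ω, θ x * φ x ≤ ∫ x in Ω, θb x * φ x)
        ↔ ((∀ᵐ x ∂(volume.restrict {x ∈ Ω | cφ < φ x}), θb x = 1) ∧
           (∀ᵐ x ∂(volume.restrict {x ∈ Ω | φ x < cφ}), θb x = 0)))) := by
  obtain ⟨hcmem, hcub⟩ := hc
  set T : ℝ := α * (volume Ω).toReal with hT
  set A : Set (Fin d → ℝ) := {x ∈ Ω | cφ < φ x} with hAdef
  set B : Set (Fin d → ℝ) := {x ∈ Ω | cφ ≤ φ x} with hBdef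
  set N : Set (Fin d → ℝ) := {x ∈ Ω | φ x < cφ} with hNdef
  have hAm : MeasurableSet A := hΩ.inter (measurableSet_lt measurable_const hφm)
  have hBm : MeasurableSet B := hΩ.inter (measurableSet_le measurable_const hφm)
  have hNm : MeasurableSet N := hΩ.inter (measurableSet_lt hφm measurable_const)
  have hAB : A ⊆ B := fun x hx => ⟨hx.1, le_of_lt hx.2⟩
  have hAΩ : A ⊆ Ω := fun x hx => hx.1
  have hBΩ : B ⊆ Ω := fun x hx => hx.1
  have hNΩ : N ⊆ Ω := fun x hx => hx.1
  have hAfin : volume A ≠ ⊤ := (lt_of_le_of_lt (measure_mono hAΩ) hfin.lt_top).ne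
  have hBfin : volume B ≠ ⊤ := (lt_of_le_of_lt (measure_mono hBΩ) hfin.lt_top).ne
  -- a ≤ T ≤ b
  have hTb : T ≤ (volume B).toReal := hcmem
  have haT : (volume A).toReal ≤ T := by
    have hU : A = ⋃ n : ℕ, {x ∈ Ω | cφ + 1/(n+1) ≤ φ x} := by
      ext x
      simp only [Set.mem_setOf_eq, Set.mem_iUnion]
      constructor
      · rintro ⟨hxΩ, hx⟩
        obtain ⟨n, hn⟩ := exists_nat_one_div_lt (sub_pos.mpr hx)
        exact ⟨n, hxΩ, by push_cast at hn ⊢; linarith⟩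
      · rintro ⟨n, hxΩ, hx⟩
        refine ⟨hxΩ, lt_of_lt_of_le ?_ hx⟩
        have : (0:ℝ) < 1/(n+1) := by positivity
        linarith
    have hmono : Monotone fun n : ℕ => {x ∈ Ω | cφ + 1/(n+1) ≤ φ x} := by
      intro m n hmn x hx
      refine ⟨hx.1, le_trans ?_ hx.2⟩
      have h1 : (1:ℝ)/(n+1) ≤ 1/(m+1) := by
        apply one_div_le_one_div_of_le (by positivity)
        exact_mod_cast by omega
      linarith
    have hlim : volume A = ⨆ n : ℕ, volume {x ∈ Ω | cφ + 1/(n+1) ≤ φ x} := by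
      rw [hU]; exact hmono.directed_le.measure_iUnion
    have hle : volume A ≤ ENNReal.ofReal T := by
      rw [hlim]
      refine iSup_le fun n => ?_
      have hfinn : volume {x ∈ Ω | cφ + 1/(n+1) ≤ φ x} ≠ ⊤ :=
        (lt_of_le_of_lt (measure_mono fun x hx => hx.1) hfin.lt_top).ne
      have hnot : (volume {x ∈ Ω | cφ + 1/(n+1) ≤ φ x}).toReal < T := by
        by_contra hcon
        push_neg at hcon
        have h1 : cφ + 1/((n:ℝ)+1) ≤ cφ := hcub hcon
        have h2 : (0:ℝ) < 1/((n:ℝ)+1) := by positivity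
        linarith
      have hTnn : (0:ℝ) ≤ T := mul_nonneg hα.1.le ENNReal.toReal_nonneg
      rw [ENNReal.le_ofReal_iff_toReal_le hfinn hTnn]
      linarith
    have hTnn : (0:ℝ) ≤ T := mul_nonneg hα.1.le ENNReal.toReal_nonneg
    calc (volume A).toReal ≤ (ENNReal.ofReal T).toReal :=
          ENNReal.toReal_mono ENNReal.ofReal_ne_top hle
      _ = T := ENNReal.toReal_ofReal hTnn
  -- measure of B \ A
  have hBA : (volume (B \ A)).toReal = (volume B).toReal - (volume A).toReal := by
    rw [measure_diff hAB hAm.nullMeasurableSet hAfin, ENNReal.toReal_sub_of_le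
      (measure_mono hAB) hBfin]
  set a : ℝ := (volume A).toReal with ha
  set b : ℝ := (volume B).toReal with hb
  have hab : a ≤ b := by linarith
  set t : ℝ := (T - a) / (b - a) with htdef
  have ht0 : 0 ≤ t := div_nonneg (by linarith) (by linarith)
  have ht1 : t ≤ 1 := by
    rcases eq_or_lt_of_le hab with h | h
    · simp [htdef, ← h]
    · rw [htdef, div_le_one (by linarith)]; linarith
  set θb : (Fin d → ℝ) → ℝ :=
    fun x => A.indicator (fun _ => (1:ℝ)) x + (B \ A).indicator (fun _ => t) x with hθbdef
  have hθbm : Measurable θb :=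
    (measurable_const.indicator hAm).add (measurable_const.indicator (hBm.diff hAm))
  -- pointwise values
  have hθbA : ∀ x ∈ A, θb x = 1 := by
    intro x hx
    have hnot : x ∉ B \ A := fun h => h.2 hx
    simp [hθbdef, Set.indicator_of_mem hx, Set.indicator_of_notMem hnot]
  have hθbBA : ∀ x ∈ B \ A, θb x = t := by
    intro x hx
    simp [hθbdef, Set.indicator_of_notMem hx.2, Set.indicator_of_mem hx]
  have hθbN : ∀ x, x ∉ B → θb x = 0 := by
    intro x hx
    simp [hθbdef, Set.indicator_of_notMem (fun h : x ∈ A => hx (hAB h)),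
      Set.indicator_of_notMem (fun h : x ∈ B \ A => hx h.1)]
  have hθbb : ∀ x ∈ Ω, θb x ∈ Set.Icc (0:ℝ) 1 := by
    intro x _
    by_cases hxA : x ∈ A
    · rw [hθbA x hxA]; exact ⟨zero_le_one, le_refl 1⟩
    · by_cases hxB : x ∈ B
      · rw [hθbBA x ⟨hxB, hxA⟩]; exact ⟨ht0, ht1⟩
      · rw [hθbN x hxB]; exact ⟨le_refl 0, zero_le_one⟩
  -- integral of θb
  have hθbint : ∫ x in Ω, θb x = T := by
    have hiA : IntegrableOn (A.indicator fun _ => (1:ℝ)) Ω := by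
      refine bathtub_intOn_bdd hΩ hfin (measurable_const.indicator hAm) fun x _ => ?_
      by_cases h : x ∈ A <;>
        simp [Set.indicator_of_mem, Set.indicator_of_notMem, h, zero_le_one]
    have hiBA : IntegrableOn ((B \ A).indicator fun _ => t) Ω := by
      refine bathtub_intOn_bdd hΩ hfin (measurable_const.indicator (hBm.diff hAm)) fun x _ => ?_
      by_cases h : x ∈ B \ A <;>
        simp [Set.indicator_of_mem, Set.indicator_of_notMem, h, ht0, ht1, zero_le_one]
    rw [hθbdef]
    rw [integral_add hiA hiBA, setIntegral_indicator hAm, setIntegral_indicator (hBm.diff hAm),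
      Set.inter_eq_self_of_subset_right hAΩ,
      Set.inter_eq_self_of_subset_right (fun x hx => hBΩ hx.1),
      setIntegral_const, setIntegral_const]
    simp only [smul_eq_mul, mul_one, measureReal_def, hBA, ← ha, ← hb]
    rcases eq_or_lt_of_le hab with h | h
    · have : T = a := le_antisymm (h ▸ hTb) haT
      rw [← h]; simp [this]
    · have hne : b - a ≠ 0 := ne_of_gt (by linarith)
      have hcancel : t * (b - a) = T - a := by rw [htdef]; exact div_mul_cancel₀ _ hne
      linear_combination hcancel
  -- key one-sided lemma: any admissible θ1 that is a.e. 1 on A and 0 on N dominates all θ2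
  have key : ∀ θ1 θ2 : (Fin d → ℝ) → ℝ,
      Measurable θ1 → (∀ x ∈ Ω, θ1 x ∈ Set.Icc (0:ℝ) 1) → (∫ x in Ω, θ1 x = T) →
      Measurable θ2 → (∀ x ∈ Ω, θ2 x ∈ Set.Icc (0:ℝ) 1) → (∫ x in Ω, θ2 x = T) →
      (∀ᵐ x ∂(volume.restrict A), θ1 x = 1) →
      (∀ᵐ x ∂(volume.restrict N), θ1 x = 0) →
      ∫ x in Ω, θ2 x * φ x ≤ ∫ x in Ω, θ1 x * φ x := by
    intro θ1 θ2 h1m h1b h1i h2m h2b h2i hae1 hae0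
    have hae1' : ∀ᵐ x ∂volume, x ∈ A → θ1 x = 1 := (ae_restrict_iff' hAm).mp hae1
    have hae0' : ∀ᵐ x ∂volume, x ∈ N → θ1 x = 0 := (ae_restrict_iff' hNm).mp hae0
    have hnn : ∀ᵐ x ∂(volume.restrict Ω), 0 ≤ (θ1 x - θ2 x) * (φ x - cφ) := by
      filter_upwards [ae_restrict_mem hΩ, ae_restrict_of_ae hae1', ae_restrict_of_ae hae0']
        with x hxΩ h1 h0
      rcases lt_trichotomy (φ x) cφ with h | h | h
      · have := h0 ⟨hxΩ, h⟩
        nlinarith [(h2b x hxΩ).1]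
      · simp [h]
      · have := h1 ⟨hxΩ, h⟩
        nlinarith [(h2b x hxΩ).2]
    have hint := integral_nonneg_of_ae (f := fun x => (θ1 x - θ2 x) * (φ x - cφ)) hnn
    rw [bathtub_expand hΩ hfin cφ hφ h1m h1b h2m h2b (h1i.trans h2i.symm)] at hint
    linarith
  have hθbmax : ∀ θ : (Fin d → ℝ) → ℝ,
      (Measurable θ ∧ (∀ x ∈ Ω, θ x ∈ Set.Icc (0:ℝ) 1) ∧ ∫ x in Ω, θ x = T) →
      ∫ x in Ω, θ x * φ x ≤ ∫ x in Ω, θb x * φ x := by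
    intro θ ⟨hm, hbd, hi⟩
    refine key θb θ hθbm hθbb hθbint hm hbd hi ?_ ?_
    · filter_upwards [ae_restrict_mem hAm] with x hx using hθbA x hx
    · filter_upwards [ae_restrict_mem hNm] with x hx using
        hθbN x (fun hB => absurd hx.2 (not_lt.mpr hB.2))
  refine ⟨⟨θb, ⟨hθbm, hθbb, hθbint⟩, hθbmax⟩, ?_⟩
  rintro θ' ⟨h'm, h'b, h'i⟩
  constructor
  · intro hmax
    -- θ' is also a maximizer; equality of max values
    have hle1 := hθbmax θ' ⟨h'm, h'b, h'i⟩
    have hle2 := hmax θb ⟨hθbm, hθbb, hθbint⟩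
    have heqint : ∫ x in Ω, (θb x - θ' x) * (φ x - cφ) = 0 := by
      rw [bathtub_expand hΩ hfin cφ hφ hθbm hθbb h'm h'b (hθbint.trans h'i.symm)]
      linarith
    have hnn : ∀ᵐ x ∂(volume.restrict Ω), 0 ≤ (θb x - θ' x) * (φ x - cφ) := by
      filter_upwards [ae_restrict_mem hΩ] with x hxΩ
      rcases lt_trichotomy (φ x) cφ with h | h | h
      · have hz : θb x = 0 := hθbN x (fun hB => absurd h (not_lt.mpr hB.2))
        rw [hz]
        nlinarith [(h'b x hxΩ).1]
      · simp [h]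
      · rw [hθbA x ⟨hxΩ, h⟩]
        nlinarith [(h'b x hxΩ).2]
    have hinteg : Integrable (fun x => (θb x - θ' x) * (φ x - cφ)) (volume.restrict Ω) := by
      have e : (fun x => (θb x - θ' x) * (φ x - cφ))
          = fun x => (θb x * φ x - θ' x * φ x) - cφ * (θb x - θ' x) := by funext x; ring
      rw [e]
      exact (((bathtub_intOn_mul hΩ hφ hθbm hθbb).sub (bathtub_intOn_mul hΩ hφ h'm h'b)).sub
        (((bathtub_intOn_bdd hΩ hfin hθbm hθbb).sub
          (bathtub_intOn_bdd hΩ hfin h'm h'b)).const_mul cφ))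
    have hzero : (fun x => (θb x - θ' x) * (φ x - cφ)) =ᵐ[volume.restrict Ω] 0 :=
      (integral_eq_zero_iff_of_nonneg_ae
        (f := fun x => (θb x - θ' x) * (φ x - cφ)) hnn hinteg).mp heqint
    constructor
    · have hzA := ae_restrict_of_ae_restrict_of_subset hAΩ hzero
      filter_upwards [hzA, ae_restrict_mem hAm] with x hx hxA
      have h1 : θb x = 1 := hθbA x hxA
      have hne : φ x - cφ ≠ 0 := sub_ne_zero.mpr (ne_of_gt hxA.2)
      have := mul_eq_zero.mp hx
      rcases this with h | h
      · linarith [sub_eq_zero.mp h, h1]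
      · exact absurd h hne
    · have hzN := ae_restrict_of_ae_restrict_of_subset hNΩ hzero
      filter_upwards [hzN, ae_restrict_mem hNm] with x hx hxN
      have h0 : θb x = 0 := hθbN x (fun hB => absurd hxN.2 (not_lt.mpr hB.2))
      have hne : φ x - cφ ≠ 0 := sub_ne_zero.mpr (ne_of_lt hxN.2)
      rcases mul_eq_zero.mp hx with h | h
      · have := sub_eq_zero.mp h; linarith
      · exact absurd h hne
  · rintro ⟨hae1, hae0⟩ θ ⟨hm, hbd, hi⟩
    exact key θ' θ h'm h'b h'i hm hbd hi hae1 hae0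
end
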